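/- (Theorem C) Let G be a countable post-injunctive group and let A be a finite alphabet. Let M ⊆ G be finite and S = A^(A^M). Let s ∈ S^G be asymptotically constant such that σ_s is stably post-surjective. Then σ_s is stably invertible. -/

import Mathlib

open Function Set Pointwise

section Defs

variable {G A S : Type*} [Group G]

/-- The NUCA `σ_s : A^G → A^G` determined by the configuration of local
defining maps `s ∈ S^G`, `S = A^(A^M)`:
`σ_s(x)(g) = s(g)((g⁻¹x)|_M)` where `(g⁻¹x)(h) = x(gh)`. -/
def nuca {M : Finset G} (s : G → ((M → A) → A)) : (G → A) → (G → A) :=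
  fun x g => s g fun m => x (g * (m : G))

/-- The closure, in the prodiscrete topology on `S^G`, of the shift orbit
`{gs : g ∈ G}`, where `(gs)(h) = s(g⁻¹h)`. -/
def orbitClosure (s : G → S) : Set (G → S) :=
  @closure (G → S) (@Pi.topologicalSpace G (fun _ => S) fun _ => ⊥)
    {p | ∃ g : G, p = fun h => s (g⁻¹ * h)}

/-- `τ` is a NUCA with finite memory. -/
def IsNUCAFin (τ : (G → A) → (G → A)) : Prop :=
  ∃ (M : Finset G) (s : G → ((M → A) → A)), τ = nuca s

/-- `τ` is invertible: it is bijective and its inverse is a NUCA with finite memory. -/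
def IsInvertibleNUCA (τ : (G → A) → (G → A)) : Prop :=
  Function.Bijective τ ∧ ∃ ρ : (G → A) → (G → A), IsNUCAFin ρ ∧
    Function.LeftInverse ρ τ ∧ Function.RightInverse ρ τ

/-- `σ_s` is stably injective: `σ_p` is injective for every `p ∈ Σ(s)`. -/
def StablyInjective {M : Finset G} (s : G → ((M → A) → A)) : Prop :=
  ∀ p ∈ orbitClosure s, Function.Injective (nuca p)

/-- `σ_s` is stably invertible. -/
def StablyInvertible {M : Finset G} (s : G → ((M → A) → A)) : Prop :=
  ∃ (N : Finset G) (t : G → ((N → A) → A)),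
    ∀ p ∈ orbitClosure s, ∃ q ∈ orbitClosure t,
      nuca p ∘ nuca q = id ∧ nuca q ∘ nuca p = id

/-- Two configurations are asymptotic if they agree outside a finite set. -/
def Asymptotic (x y : G → S) : Prop :=
  ∃ Ω : Finset G, ∀ g ∉ Ω, x g = y g

/-- `s` is asymptotically constant. -/
def AsymptoticallyConstant (s : G → S) : Prop :=
  ∃ c : S, Asymptotic s fun _ => c

/-- `τ` is pre-injective. -/
def PreInjective (τ : (G → A) → (G → A)) : Prop :=
  ∀ x y : G → A, Asymptotic x y → τ x = τ y → x = y

/-- `τ` is post-surjective. -/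
def PostSurjective (τ : (G → A) → (G → A)) : Prop :=
  ∀ x y : G → A, Asymptotic y (τ x) → ∃ z : G → A, Asymptotic z x ∧ τ z = y

/-- `σ_s` is stably post-surjective: `σ_p` is post-surjective for all `p ∈ Σ(s)`. -/
def StablyPostSurjective {M : Finset G} (s : G → ((M → A) → A)) : Prop :=
  ∀ p ∈ orbitClosure s, PostSurjective (nuca p)

/-- `τ` is a cellular automaton: a NUCA with finite memory and a constant
configuration of local defining maps. -/
def IsCellularAutomaton (τ : (G → A) → (G → A)) : Prop :=
  ∃ (M : Finset G) (μ : (M → A) → A), τ = nuca fun _ : G => μ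

/-- `G` is surjunctive: over every finite alphabet, injective CA are surjective. -/
def Surjunctive (G : Type*) [Group G] : Prop :=
  ∀ (B : Type) [Fintype B] (τ : (G → B) → (G → B)),
    IsCellularAutomaton τ → Function.Injective τ → Function.Surjective τ

/-- `G` is post-injunctive: over every finite alphabet, post-surjective CA are
pre-injective. -/
def PostInjunctive (G : Type*) [Group G] : Prop :=
  ∀ (B : Type) [Fintype B] (τ : (G → B) → (G → B)),
    IsCellularAutomaton τ → PostSurjective τ → PreInjective τ

/-- `s` has uniformly bounded singularity: for every finite symmetric `E ∋ 1`
there is a finite `F ⊇ E` such that `s` is constant on `FE ∖ F`. -/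
def UniformlyBoundedSingularity (s : G → S) : Prop :=
  ∀ E : Finset G, (1 : G) ∈ E → (∀ g ∈ E, g⁻¹ ∈ E) →
    ∃ F : Finset G, E ⊆ F ∧ ∃ c : S,
      ∀ g ∈ ((F : Set G) * (E : Set G)) \ (F : Set G), s g = c

end Defs

section Aux

open Filter

variable {G : Type*} [Group G] {A : Type*}

lemma nuca_congr {M : Finset G} (p : G → ((M → A) → A)) {x y : G → A} {g : G}
    (h : ∀ m : M, x (g * (m : G)) = y (g * (m : G))) : nuca p x g = nuca p y g := by
  unfold nuca
  exact congrArg _ (funext h)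

lemma nuca_shift {M : Finset G} (p : G → ((M → A) → A)) (g : G) (x : G → A) (h : G) :
    nuca (fun k => p (g⁻¹ * k)) x h = nuca p (fun k => x (g * k)) (g⁻¹ * h) := by
  unfold nuca
  congr 1
  funext m
  simp [mul_assoc]

lemma nuca_comp_shift {M N : Finset G} {t₁ : G → ((M → A) → A)} {t₂ : G → ((N → A) → A)}
    (hid : nuca t₁ ∘ nuca t₂ = id) (g : G) :
    nuca (fun k => t₁ (g⁻¹ * k)) ∘ nuca (fun k => t₂ (g⁻¹ * k)) = id := by
  funext x
  funext h
  show nuca (fun k => t₁ (g⁻¹ * k)) (nuca (fun k => t₂ (g⁻¹ * k)) x) h = x h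
  rw [nuca_shift t₁ g _ h]
  have h2 : (fun k => nuca (fun k' => t₂ (g⁻¹ * k')) x (g * k)) = nuca t₂ (fun j => x (g * j)) := by
    funext k
    rw [nuca_shift t₂ g x (g * k)]
    simp
  rw [h2]
  have h3 : nuca t₁ (nuca t₂ fun j => x (g * j)) = fun j => x (g * j) := congrFun hid _
  rw [h3]
  simp

lemma mem_closure_pi' {ι S : Type*} [TopologicalSpace S] [DiscreteTopology S]
    {D : Set (ι → S)} {p : ι → S} :
    p ∈ closure D ↔ ∀ F : Finset ι, ∃ d ∈ D, ∀ i ∈ F, p i = d i := by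
  constructor
  · intro hp F
    have hU : IsOpen {q : ι → S | ∀ i ∈ F, q i = p i} := by
      have he : {q : ι → S | ∀ i ∈ F, q i = p i} = Set.pi ↑F (fun i => {p i}) := by
        ext q; simp [Set.mem_pi]
      rw [he]
      exact isOpen_set_pi F.finite_toSet (fun i _ => isOpen_discrete _)
    obtain ⟨d, hd1, hd2⟩ := mem_closure_iff.mp hp _ hU (fun i _ => rfl)
    exact ⟨d, hd2, fun i hi => (hd1 i hi).symm⟩
  · intro h
    rw [mem_closure_iff]
    intro U hU hpU
    obtain ⟨I, u, h1, h2⟩ := isOpen_pi_iff.mp hU p hpU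
    obtain ⟨d, hD, hd⟩ := h I
    refine ⟨d, h2 fun i hi => ?_, hD⟩
    rw [← hd i hi]
    exact (h1 i hi).2

lemma mem_orbitClosure_iff {S : Type*} (s : G → S) (p : G → S) :
    p ∈ orbitClosure s ↔ ∀ F : Finset G, ∃ g : G, ∀ h ∈ F, p h = s (g⁻¹ * h) := by
  letI : TopologicalSpace S := ⊥
  haveI : DiscreteTopology S := ⟨rfl⟩
  have he : orbitClosure s = closure {q : G → S | ∃ g : G, q = fun h => s (g⁻¹ * h)} := rfl
  rw [he, mem_closure_pi']
  constructor
  · intro h F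
    obtain ⟨d, ⟨g, rfl⟩, hd⟩ := h F
    exact ⟨g, hd⟩
  · intro h F
    obtain ⟨g, hg⟩ := h F
    exact ⟨_, ⟨g, rfl⟩, hg⟩

lemma exists_cluster_config {B : Type*} [Finite B] (u : Finset G → (G → B)) :
    ∃ x : G → B, ∀ (V : Finset G) (F₀ : Finset G), ∃ F, F₀ ⊆ F ∧ ∀ h ∈ V, u F h = x h := by
  classical
  letI : TopologicalSpace B := ⊥
  haveI : DiscreteTopology B := ⟨rfl⟩
  haveI : NeBot (Filter.map u atTop) := Filter.map_neBot
  obtain ⟨x, hx⟩ := exists_clusterPt_of_compactSpace (Filter.map u atTop)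
  refine ⟨x, fun V F₀ => ?_⟩
  have hUopen : IsOpen {q : G → B | ∀ i ∈ V, q i = x i} := by
    have he : {q : G → B | ∀ i ∈ V, q i = x i} = Set.pi ↑V (fun i => {x i}) := by
      ext q; simp [Set.mem_pi]
    rw [he]
    exact isOpen_set_pi V.finite_toSet (fun i _ => isOpen_discrete _)
  have hUmem : {q : G → B | ∀ i ∈ V, q i = x i} ∈ nhds x :=
    hUopen.mem_nhds (fun i _ => rfl)
  have hfreq : ∃ᶠ F in atTop, u F ∈ {q : G → B | ∀ i ∈ V, q i = x i} := by
    rw [← Filter.frequently_map (m := u)]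
    rw [Filter.frequently_iff]
    intro W hW
    obtain ⟨q, hq1, hq2⟩ := clusterPt_iff_nonempty.mp hx hUmem hW
    exact ⟨q, hq2, hq1⟩
  have hev : ∀ᶠ F in atTop, F₀ ⊆ F := by
    filter_upwards [eventually_ge_atTop F₀] with F hF
    exact Finset.le_iff_subset.mp hF
  obtain ⟨F, hF1, hF2⟩ := (hfreq.and_eventually hev).exists
  exact ⟨F, hF2, hF1⟩

lemma nuca_continuous [TopologicalSpace A] [DiscreteTopology A] {M : Finset G}
    (p : G → ((M → A) → A)) : Continuous (nuca p) := by
  refine continuous_pi fun g => ?_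
  have he : (fun x : G → A => nuca p x g)
      = (fun f : M → A => p g f) ∘ (fun (x : G → A) (m : M) => x (g * m)) := rfl
  rw [he]
  exact continuous_of_discreteTopology.comp (continuous_pi fun m => continuous_apply _)

lemma tau_surjective [Fintype A] [Nonempty A] {M : Finset G} (c : (M → A) → A)
    (hps : PostSurjective (nuca fun _ : G => c)) : Function.Surjective (nuca fun _ : G => c) := by
  classical
  letI : TopologicalSpace A := ⊥
  haveI : DiscreteTopology A := ⟨rfl⟩
  intro y
  have hrange : y ∈ closure (Set.range (nuca fun _ : G => c)) := by
    rw [mem_closure_pi']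
    intro F
    set x₀ : G → A := fun _ => Classical.arbitrary A with hx₀
    set y' : G → A := fun h => if h ∈ F then y h else nuca (fun _ : G => c) x₀ h with hy'
    obtain ⟨z, _, hz⟩ := hps x₀ y' ⟨F, fun g hg => if_neg hg⟩
    exact ⟨y', ⟨z, hz⟩, fun i hi => (if_pos hi).symm⟩
  rw [IsClosed.closure_eq (isCompact_range (nuca_continuous _)).isClosed] at hrange
  exact hrange

lemma mem_orbitClosure_cases {S : Type*} (s : G → S) (c : S) (Ω : Finset G)
    (hΩ : ∀ g ∉ Ω, s g = c) {p : G → S} (hp : p ∈ orbitClosure s) :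
    (∃ g : G, p = fun h => s (g⁻¹ * h)) ∨ p = fun _ => c := by
  classical
  rw [mem_orbitClosure_iff] at hp
  choose gF hgF using hp
  by_cases hpc : ∀ h : G, p h = c
  · exact Or.inr (funext hpc)
  · left
    push_neg at hpc
    obtain ⟨h₀, hh₀⟩ := hpc
    set T : Finset G := Ω.image (fun ω => h₀ * ω⁻¹) with hT
    have hev : ∀ F : Finset G, h₀ ∈ F → gF F ∈ T := by
      intro F hF
      have hmem : (gF F)⁻¹ * h₀ ∈ Ω := by
        by_contra hc2
        exact hh₀ ((hgF F h₀ hF).trans (hΩ _ hc2))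
      exact Finset.mem_image.mpr ⟨_, hmem, by group⟩
    have hfreq : ∃ g : G, ∀ F₀ : Finset G, ∃ F, F₀ ⊆ F ∧ gF F = g := by
      by_contra hcon
      push_neg at hcon
      choose bigF hbigF using hcon
      set Fbad : Finset G := insert h₀ (T.biUnion bigF) with hFbad
      have hgT : gF Fbad ∈ T := hev Fbad (Finset.mem_insert_self _ _)
      exact hbigF (gF Fbad) Fbad
        (fun a ha => Finset.mem_insert_of_mem (Finset.mem_biUnion.mpr ⟨gF Fbad, hgT, ha⟩)) rfl
    obtain ⟨g, hg⟩ := hfreq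
    refine ⟨g, funext fun h => ?_⟩
    obtain ⟨F, hF1, hF2⟩ := hg {h}
    rw [← hF2]
    exact hgF F h (hF1 (Finset.mem_singleton_self h))

lemma preinj_of_postInjunctive (hG : PostInjunctive G) [Fintype A]
    {M : Finset G} (c : (M → A) → A) (hps : PostSurjective (nuca fun _ : G => c)) :
    PreInjective (nuca fun _ : G => c) := by
  classical
  set e : A ≃ Fin (Fintype.card A) := Fintype.equivFin A with he
  set cB : (M → Fin (Fintype.card A)) → Fin (Fintype.card A) :=
    fun f => e (c fun m => e.symm (f m)) with hcB
  have hcomm : ∀ (y : G → Fin (Fintype.card A)) (g : G),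
      nuca (fun _ : G => cB) y g
        = e (nuca (fun _ : G => c) (fun h => e.symm (y h)) g) := fun y g => rfl
  have hpsB : PostSurjective (nuca fun _ : G => cB) := by
    rintro x y ⟨Φ, hΦ⟩
    obtain ⟨z, ⟨Ψ, hΨ⟩, hz⟩ := hps (fun h => e.symm (x h)) (fun h => e.symm (y h))
      ⟨Φ, fun g hg => by show e.symm (y g) = _; rw [hΦ g hg, hcomm]; simp⟩
    refine ⟨fun h => e (z h), ⟨Ψ, fun g hg => by show e (z g) = x g; rw [hΨ g hg]; simp⟩, ?_⟩
    funext g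
    rw [hcomm]
    have hzz : (fun h => e.symm (e (z h))) = z := by funext h; simp
    rw [hzz, hz]
    simp
  have hpiB : PreInjective (nuca fun _ : G => cB) :=
    hG _ (nuca fun _ : G => cB) ⟨M, cB, rfl⟩ hpsB
  rintro x y ⟨Φ, hΦ⟩ hxy
  have hex : (fun h => e (x h)) = fun h => e (y h) := by
    refine hpiB _ _ ⟨Φ, fun g hg => by show e (x g) = e (y g); rw [hΦ g hg]⟩ ?_
    funext g
    rw [hcomm, hcomm]
    have h1 : (fun h => e.symm (e (x h))) = x := by funext h; simp
    have h2 : (fun h => e.symm (e (y h))) = y := by funext h; simp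
    rw [h1, h2, hxy]
  funext h
  exact e.injective (congrFun hex h)

lemma exists_unif_post_one [Fintype A] {M : Finset G} (c : (M → A) → A) {m₀ : G} (hm₀ : m₀ ∈ M)
    (hps : PostSurjective (nuca fun _ : G => c)) :
    ∃ K : Finset G, ∀ x y : G → A, (∀ h : G, h ≠ 1 → y h = nuca (fun _ : G => c) x h) →
      ∃ z, (∀ h ∉ K, z h = x h) ∧ nuca (fun _ : G => c) z = y := by
  classical
  by_contra hcon
  push_neg at hcon
  choose X Y hdef hbad using hcon
  obtain ⟨w, hw⟩ := exists_cluster_config (G := G) (B := A × A) (fun K h => (X K h, Y K h))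
  set x : G → A := fun h => (w h).1 with hxdef
  set y : G → A := fun h => (w h).2 with hydef
  have hdefxy : ∀ h : G, h ≠ 1 → y h = nuca (fun _ : G => c) x h := by
    intro h hne
    obtain ⟨F, -, hagr⟩ := hw (insert h (M.image fun m => h * m)) ∅
    have h1 : Y F h = y h := congrArg Prod.snd (hagr h (Finset.mem_insert_self _ _))
    have h2 : nuca (fun _ : G => c) (X F) h = nuca (fun _ : G => c) x h := by
      apply nuca_congr
      intro m
      exact congrArg Prod.fst
        (hagr (h * m) (Finset.mem_insert_of_mem (Finset.mem_image_of_mem _ m.2)))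
    rw [← h1, ← h2]
    exact hdef F h hne
  obtain ⟨z, ⟨Ωz, hΩz⟩, hz⟩ := hps x y ⟨{1}, fun h hh => hdefxy h (by simpa using hh)⟩
  set L : Finset G := insert m₀ Ωz with hL
  set V : Finset G := (L ∪ L * M⁻¹) ∪ (L * M⁻¹) * M with hV
  obtain ⟨F, hLF, hagr⟩ := hw V L
  set z' : G → A := fun h => if h ∈ L then z h else X F h with hz'
  have hsupp : ∀ h ∉ F, z' h = X F h := fun h hh => if_neg (fun hL2 => hh (hLF hL2))
  have hone : (1 : G) ∈ L * M⁻¹ :=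
    Finset.mem_mul.mpr ⟨m₀, Finset.mem_insert_self _ _, m₀⁻¹,
      Finset.mem_inv.mpr ⟨m₀, hm₀, rfl⟩, by group⟩
  have hτz' : nuca (fun _ : G => c) z' = Y F := by
    funext h
    by_cases hLM : h ∈ L * M⁻¹
    · have hzz : ∀ m : M, z' (h * (m : G)) = z (h * (m : G)) := by
        intro m
        by_cases hm : h * (m : G) ∈ L
        · simp only [hz', if_pos hm]
        · have hV1 : h * (m : G) ∈ V :=
            Finset.mem_union.mpr (Or.inr (Finset.mem_mul.mpr ⟨h, hLM, m, m.2, rfl⟩))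
          have e1 : z' (h * (m : G)) = X F (h * (m : G)) := if_neg hm
          rw [e1]
          have h3 : X F (h * (m : G)) = x (h * (m : G)) := congrArg Prod.fst (hagr _ hV1)
          rw [h3]
          exact (hΩz (h * (m : G)) (fun hmem => hm (Finset.mem_insert_of_mem hmem))).symm
      have h4 : nuca (fun _ : G => c) z' h = nuca (fun _ : G => c) z h := nuca_congr _ hzz
      rw [h4, hz]
      have hV2 : h ∈ V := Finset.mem_union.mpr (Or.inl (Finset.mem_union.mpr (Or.inr hLM)))
      exact (congrArg Prod.snd (hagr h hV2)).symm
    · have hne : h ≠ 1 := fun he => hLM (he ▸ hone)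
      have hzz : ∀ m : M, z' (h * (m : G)) = X F (h * (m : G)) := by
        intro m
        apply if_neg
        intro hmem
        exact hLM (Finset.mem_mul.mpr ⟨h * (m : G), hmem, (m : G)⁻¹,
          Finset.mem_inv.mpr ⟨(m : G), m.2, rfl⟩, by group⟩)
      have h4 : nuca (fun _ : G => c) z' h = nuca (fun _ : G => c) (X F) h := nuca_congr _ hzz
      rw [h4]
      exact (hdef F h hne).symm
  exact hbad F z' hsupp hτz'

lemma unif_post_iter [Fintype A] [DecidableEq G] {M : Finset G} (c : (M → A) → A) {K : Finset G}
    (hK : ∀ x y : G → A, (∀ h : G, h ≠ 1 → y h = nuca (fun _ : G => c) x h) →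
      ∃ z, (∀ h ∉ K, z h = x h) ∧ nuca (fun _ : G => c) z = y) :
    ∀ Φ : Finset G, ∀ x y : G → A, (∀ h ∉ Φ, y h = nuca (fun _ : G => c) x h) →
      ∃ z, (∀ h ∉ Φ * K, z h = x h) ∧ nuca (fun _ : G => c) z = y := by
  classical
  have hshift : ∀ (g : G) (v : G → A) (k : G), nuca (fun _ : G => c) (fun j => v (g * j)) k
      = nuca (fun _ : G => c) v (g * k) := by
    intro g v k
    show c _ = c _
    congr 1
    funext m
    rw [mul_assoc]
  have hKg : ∀ (g : G) (x y : G → A), (∀ h, h ≠ g → y h = nuca (fun _ : G => c) x h) →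
      ∃ z, (∀ h ∉ K.image (fun k => g * k), z h = x h) ∧ nuca (fun _ : G => c) z = y := by
    intro g x y hdef
    obtain ⟨z₁, hz₁s, hz₁⟩ := hK (fun k => x (g * k)) (fun k => y (g * k)) (by
      intro h hne
      have hgh : g * h ≠ g := fun he => hne (mul_left_cancel (by rw [he, mul_one]))
      show y (g * h) = _
      rw [hshift g x h]
      exact hdef _ hgh)
    refine ⟨fun h => z₁ (g⁻¹ * h), ?_, ?_⟩
    · intro h hh
      have hmem : g⁻¹ * h ∉ K := fun hmem => hh (Finset.mem_image.mpr ⟨g⁻¹ * h, hmem, by group⟩)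
      show z₁ (g⁻¹ * h) = x h
      rw [hz₁s _ hmem]
      simp
    · funext h
      have h6 : (fun j => (fun h' => z₁ (g⁻¹ * h')) (g * j)) = z₁ := by funext j; simp
      have h7 := hshift g (fun h' => z₁ (g⁻¹ * h')) (g⁻¹ * h)
      rw [h6] at h7
      rw [mul_inv_cancel_left] at h7
      rw [← h7, hz₁]
      simp
  intro Φ
  induction Φ using Finset.induction_on with
  | empty =>
    intro x y hdef
    have he : y = nuca (fun _ : G => c) x := funext fun h => hdef h (Finset.notMem_empty h)
    exact ⟨x, fun h _ => rfl, he.symm⟩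
  | @insert g Φ' hgΦ ih =>
    intro x y hdef
    set y' : G → A := fun h => if h = g then nuca (fun _ : G => c) x h else y h with hy'
    obtain ⟨z1, hz1s, hz1⟩ := ih x y' (by
      intro h hh
      by_cases he : h = g
      · simp only [hy', if_pos he]
      · show (if h = g then _ else y h) = _
        rw [if_neg he]
        exact hdef h (fun hmem => (Finset.mem_insert.mp hmem).elim he hh))
    obtain ⟨z, hzs, hz⟩ := hKg g z1 y (by
      intro h hne
      rw [hz1]
      show y h = (if h = g then _ else y h)
      rw [if_neg hne])
    refine ⟨z, ?_, hz⟩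
    intro h hh
    have h8 : h ∉ K.image (fun k => g * k) := by
      intro hmem
      obtain ⟨k, hk, hke⟩ := Finset.mem_image.mp hmem
      exact hh (Finset.mem_mul.mpr ⟨g, Finset.mem_insert_self _ _, k, hk, hke⟩)
    have h9 : h ∉ Φ' * K := by
      intro hmem
      obtain ⟨b, hb, k, hk, hke⟩ := Finset.mem_mul.mp hmem
      exact hh (Finset.mem_mul.mpr ⟨b, Finset.mem_insert_of_mem hb, k, hk, hke⟩)
    rw [hzs h h8, hz1s h h9]

lemma tau_injective [Fintype A] {M : Finset G} (c : (M → A) → A) {m₀ : G} (hm₀ : m₀ ∈ M)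
    (hps : PostSurjective (nuca fun _ : G => c)) (hpi : PreInjective (nuca fun _ : G => c)) :
    Function.Injective (nuca fun _ : G => c) := by
  classical
  obtain ⟨K, hK⟩ := exists_unif_post_one c hm₀ hps
  have hiter := unif_post_iter c hK
  intro x x' hxx
  by_contra hne
  obtain ⟨g₀, hg₀⟩ := Function.ne_iff.mp hne
  set D : Finset G := insert (1 : G) (K⁻¹ * M) with hD
  set B : Finset G := D.image (fun k => g₀ * k) with hB
  set x'' : G → A := fun h => if h ∈ B then x' h else x h with hx''
  set Φ : Finset G := (B * M⁻¹).filter (fun h => ¬ ∀ m ∈ M, h * m ∈ B) with hΦ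
  have hdef : ∀ h ∉ Φ, nuca (fun _ : G => c) x h = nuca (fun _ : G => c) x'' h := by
    intro h hh
    by_cases hb : ∀ m ∈ M, h * m ∈ B
    · have he : nuca (fun _ : G => c) x'' h = nuca (fun _ : G => c) x' h :=
        nuca_congr _ (fun m => if_pos (hb m m.2))
      rw [he]
      exact congrFun hxx h
    · have hnB : h ∉ B * M⁻¹ := fun hmem => hh (Finset.mem_filter.mpr ⟨hmem, hb⟩)
      have hxs : ∀ m : M, x (h * (m : G)) = x'' (h * (m : G)) := by
        intro m
        refine (if_neg ?_).symm
        intro hmem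
        exact hnB (Finset.mem_mul.mpr ⟨h * (m : G), hmem, (m : G)⁻¹,
          Finset.mem_inv.mpr ⟨(m : G), m.2, rfl⟩, by group⟩)
      exact nuca_congr _ hxs
  obtain ⟨z, hzs, hz⟩ := hiter Φ x'' (nuca (fun _ : G => c) x) (fun h hh => hdef h hh)
  have hg₀ΦK : g₀ ∉ Φ * K := by
    intro hmem
    obtain ⟨φ, hφ, k, hk, hke⟩ := Finset.mem_mul.mp hmem
    have hφ2 := (Finset.mem_filter.mp hφ).2
    apply hφ2
    intro m hm
    have hφe : φ = g₀ * k⁻¹ := by rw [← hke]; group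
    rw [hφe]
    have hmemD : k⁻¹ * m ∈ D := Finset.mem_insert_of_mem
      (Finset.mem_mul.mpr ⟨k⁻¹, Finset.mem_inv.mpr ⟨k, hk, rfl⟩, m, hm, rfl⟩)
    exact Finset.mem_image.mpr ⟨k⁻¹ * m, hmemD, by group⟩
  have hzg₀ : z g₀ = x' g₀ := by
    rw [hzs g₀ hg₀ΦK]
    exact if_pos (Finset.mem_image.mpr ⟨1, Finset.mem_insert_self _ _, mul_one g₀⟩)
  have hzx : z = x := by
    refine hpi z x ⟨B ∪ Φ * K, fun h hh => ?_⟩ hz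
    rw [hzs h (fun hm => hh (Finset.mem_union_right _ hm))]
    exact if_neg (fun hm => hh (Finset.mem_union_left _ hm))
  rw [hzx] at hzg₀
  exact hg₀ hzg₀

lemma inv_window [Fintype A] [Nonempty A] {M : Finset G} {σl : G → ((M → A) → A)}
    (hbij : Function.Bijective (nuca σl)) (g : G) :
    ∃ F : Finset G, ∀ y y' : G → A, (∀ h ∈ F, y h = y' h) →
      Function.invFun (nuca σl) y g = Function.invFun (nuca σl) y' g := by
  classical
  by_contra hcon
  push_neg at hcon
  choose Y Y' hagree hne using hcon
  set χ := Function.invFun (nuca σl) with hχ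
  obtain ⟨w, hw⟩ := exists_cluster_config (G := G) (B := (A × A) × (A × A))
    (fun F h => ((Y F h, Y' F h), (χ (Y F) h, χ (Y' F) h)))
  set y : G → A := fun h => (w h).1.1 with hy
  set y' : G → A := fun h => (w h).1.2 with hy'
  set x : G → A := fun h => (w h).2.1 with hx0
  set x' : G → A := fun h => (w h).2.2 with hx0'
  have hrinv : ∀ v : G → A, nuca σl (χ v) = v := fun v => Function.rightInverse_invFun hbij.2 v
  have hyy' : y = y' := by
    funext h
    obtain ⟨F, hF1, hagr⟩ := hw {h} {h}
    have e1 : Y F h = y h := congrArg (fun q => q.1.1) (hagr h (Finset.mem_singleton_self h))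
    have e2 : Y' F h = y' h := congrArg (fun q => q.1.2) (hagr h (Finset.mem_singleton_self h))
    rw [← e1, ← e2]
    exact hagree F h (hF1 (Finset.mem_singleton_self h))
  have hx : nuca σl x = y := by
    funext h
    obtain ⟨F, -, hagr⟩ := hw (insert h (M.image fun m => h * m)) ∅
    have e1 : nuca σl x h = nuca σl (χ (Y F)) h := by
      apply nuca_congr
      intro m
      exact (congrArg (fun q => q.2.1)
        (hagr (h * m) (Finset.mem_insert_of_mem (Finset.mem_image_of_mem _ m.2)))).symm
    rw [e1, hrinv]
    exact congrArg (fun q => q.1.1) (hagr h (Finset.mem_insert_self _ _))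
  have hx' : nuca σl x' = y' := by
    funext h
    obtain ⟨F, -, hagr⟩ := hw (insert h (M.image fun m => h * m)) ∅
    have e1 : nuca σl x' h = nuca σl (χ (Y' F)) h := by
      apply nuca_congr
      intro m
      exact (congrArg (fun q => q.2.2)
        (hagr (h * m) (Finset.mem_insert_of_mem (Finset.mem_image_of_mem _ m.2)))).symm
    rw [e1, hrinv]
    exact congrArg (fun q => q.1.2) (hagr h (Finset.mem_insert_self _ _))
  have hxx' : x = x' := hbij.1 (by rw [hx, hx', hyy'])
  obtain ⟨F, -, hagr⟩ := hw {g} ∅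
  have e1 : χ (Y F) g = x g := congrArg (fun q => q.2.1) (hagr g (Finset.mem_singleton_self g))
  have e2 : χ (Y' F) g = x' g := congrArg (fun q => q.2.2) (hagr g (Finset.mem_singleton_self g))
  exact hne F (by rw [e1, e2, hxx'])

end Aux


/-- Theorem C: over a countable post-injunctive group universe and
a finite alphabet, every stably post-surjective NUCA with finite memory and
asymptotically constant configuration of local defining maps is stably
invertible. -/
theorem theoremC {G : Type*} [Group G] [Countable G] (hG : PostInjunctive G)
    {A : Type*} [Fintype A] {M : Finset G} (s : G → ((M → A) → A))
    (hconst : AsymptoticallyConstant s) (hpost : StablyPostSurjective s) :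
    StablyInvertible s := by
  classical
  obtain ⟨c, Ω, hΩ⟩ := hconst
  by_cases hsub : Subsingleton (G → A)
  · refine ⟨M, s, fun p hp => ⟨p, hp, ?_, ?_⟩⟩ <;> funext x <;> exact Subsingleton.elim _ _
  · have hnt : Nontrivial (G → A) := not_subsingleton_iff_nontrivial.mp hsub
    obtain ⟨x₁, x₂, hx12⟩ := hnt
    have hAnt : Nontrivial A := by
      obtain ⟨h, hh⟩ := Function.ne_iff.mp hx12
      exact ⟨x₁ h, x₂ h, hh⟩
    haveI := hAnt
    haveI : Nonempty A := ⟨x₁ 1⟩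
    have hs_mem : s ∈ orbitClosure s := by
      rw [mem_orbitClosure_iff]
      exact fun F => ⟨1, fun h _ => by simp⟩
    have hps_s : PostSurjective (nuca s) := hpost s hs_mem
    have hM : M.Nonempty := by
      by_contra hM
      rw [Finset.not_nonempty_iff_eq_empty] at hM
      have hconst2 : ∀ x x' : G → A, nuca s x = nuca s x' := by
        intro x x'
        funext g
        apply nuca_congr
        intro m
        exact absurd m.2 (by simp [hM])
      obtain ⟨a, b, hab⟩ := hAnt
      set x₀ : G → A := fun _ => a with hx₀
      set w := nuca s x₀ with hw
      set y : G → A := fun h => if h = 1 then (if w 1 = a then b else a) else w h with hy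
      have hyw : y 1 ≠ w 1 := by
        by_cases hwa : w 1 = a
        · simp only [hy, if_pos rfl, if_pos hwa, hwa]
          exact fun e => hab e.symm
        · simp only [hy, if_pos rfl, if_neg hwa]
          exact fun e => hwa e.symm
      obtain ⟨z, -, hz⟩ := hps_s x₀ y
        ⟨{1}, fun g hg => by simp only [hy, if_neg (by simpa using hg : g ≠ 1)]; rfl⟩
      rw [hconst2 z x₀] at hz
      exact hyw (by rw [← hz])
    obtain ⟨m₀, hm₀⟩ := hM
    cases finite_or_infinite G with
    | inl hfin =>
      haveI := Fintype.ofFinite G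
      have hsurj : Function.Surjective (nuca s) := fun y => by
        obtain ⟨z, -, hz⟩ := hps_s y y ⟨Finset.univ, fun g hg => absurd (Finset.mem_univ g) hg⟩
        exact ⟨z, hz⟩
      have hinj : Function.Injective (nuca s) := Finite.injective_iff_surjective.mpr hsurj
      set χ := Function.invFun (nuca s) with hχ
      set Gu : Finset G := Finset.univ with hGu
      set t : G → ((Gu → A) → A) :=
        fun g f => χ (fun h => f ⟨g⁻¹ * h, Finset.mem_univ _⟩) g with htdef
      have ht : nuca t = χ := by
        funext x g
        show t g (fun m => x (g * m)) = χ x g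
        simp only [htdef]
        have he : (fun h => x (g * (g⁻¹ * h))) = x := by funext h; simp
        rw [he]
      have hid1 : nuca s ∘ nuca t = id := by
        rw [ht]; funext y; exact Function.rightInverse_invFun hsurj y
      have hid2 : nuca t ∘ nuca s = id := by
        rw [ht]; funext y; exact Function.leftInverse_invFun hinj y
      refine ⟨Gu, t, fun p hp => ?_⟩
      obtain ⟨g, hg⟩ : ∃ g : G, p = fun h => s (g⁻¹ * h) := by
        rw [mem_orbitClosure_iff] at hp
        obtain ⟨g, hg⟩ := hp Finset.univ
        exact ⟨g, funext fun h => hg h (Finset.mem_univ h)⟩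
      refine ⟨fun h => t (g⁻¹ * h), ?_, ?_, ?_⟩
      · rw [mem_orbitClosure_iff]
        exact fun F => ⟨g, fun h _ => rfl⟩
      · rw [hg]; exact nuca_comp_shift hid1 g
      · rw [hg]; exact nuca_comp_shift hid2 g
    | inr hinf =>
      have hc_mem : (fun _ : G => c) ∈ orbitClosure s := by
        rw [mem_orbitClosure_iff]
        intro F
        obtain ⟨g, hg⟩ := Infinite.exists_notMem_finset (F * Ω⁻¹)
        refine ⟨g, fun h hh => ?_⟩
        refine (hΩ _ (fun hmem => hg ?_)).symm
        exact Finset.mem_mul.mpr ⟨h, hh, (g⁻¹ * h)⁻¹, Finset.mem_inv.mpr ⟨g⁻¹ * h, hmem, rfl⟩, by group⟩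
      have hps_c : PostSurjective (nuca fun _ : G => c) := hpost _ hc_mem
      have hpi_c : PreInjective (nuca fun _ : G => c) := preinj_of_postInjunctive hG c hps_c
      have hinj_c : Function.Injective (nuca fun _ : G => c) := tau_injective c hm₀ hps_c hpi_c
      have hsurj_c : Function.Surjective (nuca fun _ : G => c) := tau_surjective c hps_c
      set θ := Function.invFun (nuca fun _ : G => c) with hθdef
      have hθl : ∀ x, θ (nuca (fun _ : G => c) x) = x := Function.leftInverse_invFun hinj_c
      have hθr : ∀ y, nuca (fun _ : G => c) (θ y) = y := Function.rightInverse_invFun hsurj_c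
      obtain ⟨F₁, hF₁⟩ := inv_window ⟨hinj_c, hsurj_c⟩ (1 : G)
      set a₀ : A := Classical.arbitrary A with ha₀
      set d : (F₁ → A) → A :=
        fun f => θ (fun h => if hh : h ∈ F₁ then f ⟨h, hh⟩ else a₀) 1 with hd
      have hshift : ∀ (y : G → A) (g k : G),
          nuca (fun _ : G => c) (fun j => y (g * j)) k = nuca (fun _ : G => c) y (g * k) := by
        intro y g k
        show c _ = c _
        congr 1
        funext m
        rw [mul_assoc]
      have hθshift : ∀ (y : G → A) (g : G), θ y g = θ (fun k => y (g * k)) 1 := by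
        intro y g
        have h1 : nuca (fun _ : G => c) (fun k => θ y (g * k)) = fun k => y (g * k) := by
          funext k
          rw [hshift (θ y) g k, hθr]
        have h2 : (fun k => θ y (g * k)) = θ (fun k => y (g * k)) := by
          conv_rhs => rw [← h1]
          rw [hθl]
        calc θ y g = θ y (g * 1) := by rw [mul_one]
          _ = θ (fun k => y (g * k)) 1 := congrFun h2 1
      have hCH : ∀ (y : G → A) (g : G), θ y g = d (fun n : F₁ => y (g * n)) := by
        intro y g
        rw [hθshift y g]
        apply hF₁
        intro h hh
        show y (g * h) = _
        rw [dif_pos hh]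
      set Ω' : Finset G := Ω * F₁⁻¹ with hΩ'def
      set ρ : (G → A) → (G → A) := fun x => θ (nuca s x) with hρdef
      have hρ_id : ∀ (x : G → A) (g : G), g ∉ Ω' → ρ x g = x g := by
        intro x g hg
        have hloc : ∀ n : F₁, nuca s x (g * (n : G)) = nuca (fun _ : G => c) x (g * (n : G)) := by
          intro n
          show s (g * (n : G)) _ = c _
          rw [hΩ (g * (n : G)) (fun hmem => hg (Finset.mem_mul.mpr
            ⟨g * (n : G), hmem, (n : G)⁻¹, Finset.mem_inv.mpr ⟨(n : G), n.2, rfl⟩, by group⟩))]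
        calc ρ x g = d (fun n : F₁ => nuca s x (g * (n : G))) := hCH _ g
          _ = d (fun n : F₁ => nuca (fun _ : G => c) x (g * (n : G))) :=
              congrArg d (funext hloc)
          _ = θ (nuca (fun _ : G => c) x) g := (hCH _ g).symm
          _ = x g := congrFun (hθl x) g
      have hρ_ps : PostSurjective ρ := by
        rintro x y ⟨Φ, hΦ⟩
        have hasym : Asymptotic (nuca (fun _ : G => c) y) (nuca s x) := by
          refine ⟨Φ * M⁻¹, fun h hh => ?_⟩
          have hyx : ∀ m : M, y (h * (m : G)) = ρ x (h * (m : G)) := by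
            intro m
            exact hΦ _ (fun hmem => hh (Finset.mem_mul.mpr
              ⟨h * (m : G), hmem, (m : G)⁻¹, Finset.mem_inv.mpr ⟨(m : G), m.2, rfl⟩, by group⟩))
          calc nuca (fun _ : G => c) y h = nuca (fun _ : G => c) (ρ x) h := nuca_congr _ hyx
            _ = nuca s x h := by
                show nuca (fun _ : G => c) (θ (nuca s x)) h = nuca s x h
                rw [hθr]
        obtain ⟨z, hzx, hz⟩ := hps_s x (nuca (fun _ : G => c) y) hasym
        refine ⟨z, hzx, ?_⟩
        show θ (nuca s z) = y
        rw [hz, hθl]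
      have key : ∀ x y : G → A, (∀ g ∉ Ω', y g = x g) →
          ∃ z, (∀ g ∉ Ω', z g = x g) ∧ ρ z = y := by
        intro x y hy
        obtain ⟨z, -, hz⟩ := hρ_ps x y
          ⟨Ω', fun g hg => by rw [hy g hg, ← hρ_id x g hg]⟩
        refine ⟨z, fun g hg => ?_, hz⟩
        rw [← hρ_id z g hg, hz, hy g hg]
      have hinj_ρ : Function.Injective ρ := by
        intro x x' he
        have hagree : ∀ g ∉ Ω', x' g = x g := by
          intro g hg
          rw [← hρ_id x' g hg, ← he, hρ_id x g hg]
        haveI hFibFin : Finite {w : G → A // ∀ g ∉ Ω', w g = x g} := by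
          apply Finite.of_injective (fun w => (fun i : Ω' => w.1 i))
          intro w w' hww
          apply Subtype.ext
          funext g
          by_cases hg : g ∈ Ω'
          · exact congrFun hww ⟨g, hg⟩
          · rw [w.2 g hg, w'.2 g hg]
        set Fmap : {w : G → A // ∀ g ∉ Ω', w g = x g} → {w : G → A // ∀ g ∉ Ω', w g = x g} :=
          fun w => ⟨ρ w.1, fun g hg => by rw [hρ_id w.1 g hg]; exact w.2 g hg⟩ with hFmap
        have hFsurj : Function.Surjective Fmap := by
          intro w
          obtain ⟨z, hz1, hz2⟩ := key x w.1 w.2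
          exact ⟨⟨z, hz1⟩, Subtype.ext hz2⟩
        have hFinj : Function.Injective Fmap := Finite.injective_iff_surjective.mpr hFsurj
        have hfe : (⟨x, fun g _ => rfl⟩ : {w : G → A // ∀ g ∉ Ω', w g = x g})
            = ⟨x', hagree⟩ := hFinj (Subtype.ext he)
        exact congrArg Subtype.val hfe
      have hsurj_ρ : Function.Surjective ρ := by
        intro y
        obtain ⟨z, -, hz⟩ := key y y (fun _ _ => rfl)
        exact ⟨z, hz⟩
      have hinj_s : Function.Injective (nuca s) := by
        intro x x' he
        exact hinj_ρ (by show θ (nuca s x) = θ (nuca s x'); rw [he])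
      have hsurj_s : Function.Surjective (nuca s) := by
        intro y
        obtain ⟨x, hx⟩ := hsurj_ρ (θ y)
        refine ⟨x, ?_⟩
        have h1 := congrArg (nuca fun _ : G => c) hx
        rw [hθr, hθr] at h1
        exact h1
      set χ := Function.invFun (nuca s) with hχdef
      have hχl : ∀ x, χ (nuca s x) = x := Function.leftInverse_invFun hinj_s
      have hχr : ∀ y, nuca s (χ y) = y := Function.rightInverse_invFun hsurj_s
      have hχθ : ∀ (y : G → A) (g : G), g ∉ Ω' → χ y g = θ y g := by
        intro y g hg
        calc χ y g = ρ (χ y) g := (hρ_id _ g hg).symm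
          _ = θ y g := by show θ (nuca s (χ y)) g = θ y g; rw [hχr]
      have hwin : ∀ g : G, ∃ F : Finset G, ∀ y y' : G → A, (∀ h ∈ F, y h = y' h) →
          χ y g = χ y' g := fun g => inv_window ⟨hinj_s, hsurj_s⟩ g
      choose Fg hFg using hwin
      set Nt : Finset G := F₁ ∪ Ω'.biUnion (fun g => (Fg g).image (fun h => g⁻¹ * h)) with hNt
      have hF₁Nt : F₁ ⊆ Nt := Finset.subset_union_left
      set c' : (Nt → A) → A := fun f => d (fun n => f ⟨n.1, hF₁Nt n.2⟩) with hc'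
      set t : G → ((Nt → A) → A) := fun g f =>
        if hg : g ∈ Ω' then χ (fun h => if hh : g⁻¹ * h ∈ Nt then f ⟨g⁻¹ * h, hh⟩ else a₀) g
        else c' f with htdef
      have ht_c' : ∀ g ∉ Ω', t g = c' := by
        intro g hg
        simp only [htdef, dif_neg hg]
      have hθ' : nuca (fun _ : G => c') = θ := by
        funext y g
        show c' (fun m : Nt => y (g * m)) = θ y g
        rw [hCH y g]
      have hnuca_t : nuca t = χ := by
        funext y g
        show t g (fun m : Nt => y (g * m)) = χ y g
        by_cases hg : g ∈ Ω'
        · simp only [htdef, dif_pos hg]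
          apply hFg g
          intro h hh
          have hmem : g⁻¹ * h ∈ Nt := Finset.mem_union_right _
            (Finset.mem_biUnion.mpr ⟨g, hg, Finset.mem_image.mpr ⟨h, hh, rfl⟩⟩)
          show (if hh' : g⁻¹ * h ∈ Nt then y (g * (g⁻¹ * h)) else a₀) = y h
          rw [dif_pos hmem, mul_inv_cancel_left]
        · simp only [htdef, dif_neg hg]
          have he : c' (fun m : Nt => y (g * m)) = θ y g := by
            rw [hCH y g]
          rw [he]
          exact (hχθ y g hg).symm
      have hid1 : nuca s ∘ nuca t = id := by
        rw [hnuca_t]; funext y; exact hχr y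
      have hid2 : nuca t ∘ nuca s = id := by
        rw [hnuca_t]; funext x; exact hχl x
      refine ⟨Nt, t, fun p hp => ?_⟩
      rcases mem_orbitClosure_cases s c Ω hΩ hp with ⟨g, hg⟩ | hg
      · refine ⟨fun h => t (g⁻¹ * h), ?_, ?_, ?_⟩
        · rw [mem_orbitClosure_iff]
          exact fun F => ⟨g, fun h _ => rfl⟩
        · rw [hg]; exact nuca_comp_shift hid1 g
        · rw [hg]; exact nuca_comp_shift hid2 g
      · refine ⟨fun _ => c', ?_, ?_, ?_⟩
        · rw [mem_orbitClosure_iff]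
          intro F
          obtain ⟨g, hgn⟩ := Infinite.exists_notMem_finset (F * Ω'⁻¹)
          refine ⟨g, fun h hh => ?_⟩
          refine (ht_c' (g⁻¹ * h) (fun hmem => hgn ?_)).symm
          exact Finset.mem_mul.mpr ⟨h, hh, (g⁻¹ * h)⁻¹,
            Finset.mem_inv.mpr ⟨g⁻¹ * h, hmem, rfl⟩, by group⟩
        · rw [hg, hθ']
          funext y
          exact hθr y
        · rw [hg, hθ']
          funext y
          exact hθl y
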